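/- For a positive semidefinite matrix S and x ∈ [0,1]^n, x^T S x ≤ Σ_{i=1}^n S_{ii} x_i. -/

import Mathlib

open Matrix BigOperators

lemma key17 {n : ℕ} (S : Matrix (Fin n) (Fin n) ℝ) (hS : S.PosSemidef) (i j : Fin n) :
    S i j + S j i ≤ S i i + S j j := by
  have h := hS.dotProduct_mulVec_nonneg (Pi.single i 1 - Pi.single j 1)
  simp only [star_trivial, dotProduct, mulVec, Pi.sub_apply] at h
  simp only [sub_mul, mul_sub, Finset.sum_sub_distrib, dotProduct,
    Pi.single_apply] at h
  simp [Finset.sum_ite_eq', Finset.mul_sum, Finset.sum_ite_eq,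
    mul_comm, mul_ite] at h
  nlinarith [h]

lemma diag17 {n : ℕ} (S : Matrix (Fin n) (Fin n) ℝ) (hS : S.PosSemidef) (i : Fin n) :
    0 ≤ S i i := by
  have h := hS.dotProduct_mulVec_nonneg (Pi.single i 1)
  simpa [dotProduct, mulVec, Pi.single_apply, Finset.sum_ite_eq, Finset.mul_sum, mul_ite] using h

theorem stmt_17 (n : ℕ) (S : Matrix (Fin n) (Fin n) ℝ) (hS : S.PosSemidef)
    (x : Fin n → ℝ) (hx : ∀ i, 0 ≤ x i ∧ x i ≤ 1)
    (uΩ : ℝ) (huΩ : ∑ i, x i ≤ uΩ) :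
    x ⬝ᵥ S.mulVec x - uΩ * ∑ i, S i i * x i ≤ 0 := by
  have hsym : ∀ i j, S i j = S j i := by
    intro i j
    have := hS.1
    rw [Matrix.IsHermitian] at this
    conv_lhs => rw [← this]
    simp [conjTranspose_apply]
  have hA : ∑ i, ∑ j, S i i * x i * x j = (∑ i, S i i * x i) * (∑ j, x j) := by
    rw [Finset.sum_mul_sum]
  have hB : ∑ i : Fin n, ∑ j, S j j * (x i * x j) = (∑ i, S i i * x i) * (∑ j, x j) := by
    rw [Finset.sum_comm, Finset.sum_mul_sum]
    apply Finset.sum_congr rfl; intro i _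
    apply Finset.sum_congr rfl; intro j _
    ring
  have h1 : x ⬝ᵥ S.mulVec x ≤ (∑ i, S i i * x i) * (∑ j, x j) := by
    calc x ⬝ᵥ S.mulVec x = ∑ i, ∑ j, x i * (S i j * x j) := by
          simp [dotProduct, mulVec, Finset.mul_sum]
      _ ≤ ∑ i, ∑ j, ((S i i + S j j)/2) * (x i * x j) := by
          apply Finset.sum_le_sum; intro i _
          apply Finset.sum_le_sum; intro j _
          have hij := key17 S hS i j
          have hs := hsym i j
          nlinarith [mul_nonneg (hx i).1 (hx j).1]
      _ = (∑ i, ∑ j, (S i i * x i * x j + S j j * (x i * x j)))/2 := by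
          rw [Finset.sum_div]
          apply Finset.sum_congr rfl; intro i _
          rw [Finset.sum_div]
          apply Finset.sum_congr rfl; intro j _
          ring
      _ = (∑ i, S i i * x i) * (∑ j, x j) := by
          simp only [Finset.sum_add_distrib, hA, hB]
          ring
  have hdnn : 0 ≤ ∑ i, S i i * x i :=
    Finset.sum_nonneg fun i _ => mul_nonneg (diag17 S hS i) (hx i).1
  nlinarith [h1]
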